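/- Let f be a bounded continuous section of π, fix y ∈ Y, let (t_n) be positive reals with t_n → 0, and let (y_n) ⊆ Y be a quasi-minimizing sequence, i.e. g(y_n) + d(f(y), π⁻¹(y_n))² / (2 t_n) ≤ u(y, t_n) + 1/n for all n ∈ ℕ. Then d(f(y), π⁻¹(y_n)) → 0 as n → ∞; consequently the distance between the fibers, inf{ dist(a,b) : a ∈ π⁻¹(y), b ∈ π⁻¹(y_n) }, also tends to 0. -/

import Mathlib

open Metric Set Filter

lemma coord_le_norm' (κ : ℕ) (x : EuclideanSpace ℝ (Fin κ)) (j : Fin κ) : |x j| ≤ ‖x‖ := by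
  rw [EuclideanSpace.norm_eq x, ← Real.sqrt_sq_eq_abs]
  apply Real.sqrt_le_sqrt
  have : x j ^ 2 = ‖x j‖ ^ 2 := by rw [Real.norm_eq_abs, sq_abs]
  rw [this]
  exact Finset.single_le_sum (f := fun i => ‖x i‖ ^ 2) (fun i _ => sq_nonneg _) (Finset.mem_univ j)

/-- quasi-minimizing sequences for `u(y, t_n)` with `t_n → 0`
satisfy `d(f(y), π⁻¹(y_n)) → 0`, and consequently the distance between the
fibers `π⁻¹(y)` and `π⁻¹(y_n)` tends to `0`. -/
theorem stmt_2
    (κ : ℕ) (hκ : 1 ≤ κ)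
    (Y : Set (EuclideanSpace ℝ (Fin κ))) (hYne : Y.Nonempty)
    (hYbd : Bornology.IsBounded Y)
    (π : EuclideanSpace ℝ (Fin κ) → Y)
    (hπsurj : Function.Surjective π)
    (f : Y → EuclideanSpace ℝ (Fin κ))
    (hsec : ∀ y : Y, π (f y) = y)
    (hfcont : Continuous f)
    (hfbd : Bornology.IsBounded (Set.range f))
    (g : Y → ℝ) (hg : ∀ y : Y, g y = ⨆ j : Fin κ, f y j)
    (u : Y → ℝ → ℝ)
    (hu : ∀ (y : Y) (t : ℝ), u y t =
      ⨅ z : Y, (Metric.infDist (f y) {x | π x = z}) ^ 2 / (2 * t) + g z)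
    (y : Y) (t : ℕ → ℝ) (ht : ∀ n, 0 < t n)
    (htlim : Tendsto t atTop (nhds 0))
    (yseq : ℕ → Y)
    (hquasi : ∀ n : ℕ,
      g (yseq n) + (Metric.infDist (f y) {x | π x = yseq n}) ^ 2 / (2 * t n)
        ≤ u y (t n) + 1 / (n : ℝ)) :
    Tendsto (fun n => Metric.infDist (f y) {x | π x = yseq n}) atTop (nhds 0)
    ∧
    Tendsto (fun n =>
      sInf { r : ℝ | ∃ a ∈ {x | π x = y}, ∃ b ∈ {x | π x = yseq n}, r = dist a b })
      atTop (nhds 0) := by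
  have hFin : Nonempty (Fin κ) := ⟨⟨0, hκ⟩⟩
  -- bound on f
  obtain ⟨M, hM⟩ := isBounded_iff_forall_norm_le.1 hfbd
  have hM' : ∀ z : Y, ‖f z‖ ≤ M := fun z => hM _ ⟨z, rfl⟩
  have hM0 : 0 ≤ M := le_trans (norm_nonneg _) (hM' y)
  have hcoord : ∀ (z : Y) (j : Fin κ), |f z j| ≤ M :=
    fun z j => (coord_le_norm' κ (f z) j).trans (hM' z)
  have hgle : ∀ z : Y, g z ≤ M := by
    intro z
    rw [hg]
    exact ciSup_le fun j => (le_abs_self _).trans (hcoord z j)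
  have hgge : ∀ z : Y, -M ≤ g z := by
    intro z
    rw [hg]
    have hb : BddAbove (Set.range fun j => f z j) :=
      ⟨M, by rintro r ⟨j, rfl⟩; exact (le_abs_self _).trans (hcoord z j)⟩
    refine le_trans ?_ (le_ciSup hb ⟨0, hκ⟩)
    have := hcoord z ⟨0, hκ⟩
    cases abs_le.1 this with
    | intro h1 h2 => exact h1
  -- membership of f y in its fiber
  have hfy : (f y) ∈ {x | π x = y} := hsec y
  -- u y t ≤ g y
  have hule : ∀ s : ℝ, 0 < s → u y s ≤ g y := by
    intro s hs
    rw [hu]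
    have hbdd : BddBelow (Set.range fun z : Y =>
        (Metric.infDist (f y) {x | π x = z}) ^ 2 / (2 * s) + g z) := by
      refine ⟨-M, ?_⟩
      rintro r ⟨z, rfl⟩
      have h1 : (0:ℝ) ≤ (Metric.infDist (f y) {x | π x = z}) ^ 2 / (2 * s) :=
        div_nonneg (sq_nonneg _) (by linarith)
      linarith [hgge z]
    refine le_of_eq_of_le ?_ (ciInf_le hbdd y) |>.trans_eq ?_ |>.trans_eq rfl
    · rfl
    · rw [Metric.infDist_zero_of_mem hfy]
      simp
  -- key quadratic bound
  set d : ℕ → ℝ := fun n => Metric.infDist (f y) {x | π x = yseq n} with hd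
  have hdnonneg : ∀ n, 0 ≤ d n := fun n => Metric.infDist_nonneg
  have h1n : ∀ n : ℕ, 1 / (n : ℝ) ≤ 1 := by
    intro n
    cases n with
    | zero => simp
    | succ m =>
      rw [div_le_one (by positivity)]
      exact_mod_cast Nat.one_le_iff_ne_zero.2 (Nat.succ_ne_zero m)
  have hsq : ∀ n, d n ^ 2 ≤ (4 * M + 2) * t n := by
    intro n
    have h := hquasi n
    have h2 : d n ^ 2 / (2 * t n) ≤ 2 * M + 1 := by
      have := hule (t n) (ht n)
      have := hgge (yseq n)
      have := hgle y
      have := h1n n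
      linarith
    have h3 : 0 < 2 * t n := by linarith [ht n]
    calc d n ^ 2 = d n ^ 2 / (2 * t n) * (2 * t n) := by rw [div_mul_cancel₀ _ h3.ne']
      _ ≤ (2 * M + 1) * (2 * t n) := by
          apply mul_le_mul_of_nonneg_right h2 (le_of_lt h3)
      _ = (4 * M + 2) * t n := by ring
  -- d² → 0
  have hsqlim : Tendsto (fun n => d n ^ 2) atTop (nhds 0) := by
    apply squeeze_zero (fun n => sq_nonneg _) hsq
    have : Tendsto (fun n => (4 * M + 2) * t n) atTop (nhds ((4 * M + 2) * 0)) :=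
      htlim.const_mul _
    simpa using this
  -- d → 0
  have hdlim : Tendsto d atTop (nhds 0) := by
    have : Tendsto (fun n => Real.sqrt (d n ^ 2)) atTop (nhds 0) := by
      have := (Real.continuous_sqrt.tendsto 0).comp hsqlim
      simpa [Function.comp_def] using this
    refine this.congr fun n => ?_
    rw [Real.sqrt_sq (hdnonneg n)]
  refine ⟨hdlim, ?_⟩
  -- second part
  set S : ℕ → Set ℝ := fun n =>
    { r : ℝ | ∃ a ∈ {x | π x = y}, ∃ b ∈ {x | π x = yseq n}, r = dist a b } with hS
  have hfib : ∀ n, {x | π x = yseq n}.Nonempty := fun n => hπsurj (yseq n)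
  have hSne : ∀ n, (S n).Nonempty := by
    intro n
    obtain ⟨b, hb⟩ := hfib n
    exact ⟨dist (f y) b, f y, hfy, b, hb, rfl⟩
  have hSbdd : ∀ n, BddBelow (S n) := by
    intro n
    refine ⟨0, ?_⟩
    rintro r ⟨a, _, b, _, rfl⟩
    exact dist_nonneg
  have hS0 : ∀ n, 0 ≤ sInf (S n) := fun n =>
    le_csInf (hSne n) (by rintro r ⟨a, _, b, _, rfl⟩; exact dist_nonneg)
  have hSle : ∀ n, sInf (S n) ≤ d n := by
    intro n
    refine le_of_forall_pos_le_add fun ε hε => ?_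
    obtain ⟨b, hb, hdb⟩ := (Metric.infDist_lt_iff (hfib n)).1
      (by linarith [hdnonneg n] : Metric.infDist (f y) {x | π x = yseq n} < d n + ε)
    exact (csInf_le (hSbdd n) ⟨f y, hfy, b, hb, rfl⟩).trans hdb.le
  exact squeeze_zero hS0 hSle hdlim
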